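/- A set U of arcs on n points equals the set of arcs corresponding to the uncontracted join-irreducible permutations of some lattice congruence on the weak order on S_n if and only if U is closed under passing to subarcs. -/

import Mathlib

/-- A (combinatorial, type-A) arc on the points of `Fin n`: endpoints `p < q`
together with the set `R` of interior points passed on the right. -/
structure Arc (n : ℕ) where
  p : Fin n
  q : Fin n
  R : Finset (Fin n)
  hpq : p < q
  hR : ∀ i ∈ R, p < i ∧ i < q

namespace Arc

variable {n : ℕ}

/-- The side of the arc `α` at a point `i` of its closed interval:
`0` at endpoints, `1` if `i` is right of `α`, `-1` if left. -/
def sgn (α : Arc n) (i : Fin n) : ℤ :=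
  if i = α.p ∨ i = α.q then 0 else if i ∈ α.R then 1 else -1

/-- Two arcs cross if their relative horizontal order flips somewhere on the
intersection of their closed intervals of points. -/
def Crosses (α β : Arc n) : Prop :=
  ∃ i j : Fin n, max α.p β.p ≤ i ∧ i < j ∧ j ≤ min α.q β.q ∧
    (sgn α i - sgn β i) * (sgn α j - sgn β j) < 0

/-- Two arcs are compatible if they do not share an upper endpoint, do not share
a lower endpoint, and do not cross. -/
def Compatible (α β : Arc n) : Prop :=
  α.p ≠ β.p ∧ α.q ≠ β.q ∧ ¬ Crosses α β

end Arc

/-- A noncrossing arc diagram: a set of pairwise compatible arcs. -/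
def IsNCAD {n : ℕ} (D : Set (Arc n)) : Prop :=
  ∀ α ∈ D, ∀ β ∈ D, α ≠ β → Arc.Compatible α β

/-- The arc diagram `δ(π)` of a permutation `π`: one arc per descent, with
lower endpoint `π (i+1)`, upper endpoint `π i`, passing right of exactly the
intermediate values occurring after position `i`. -/
def diagram {n : ℕ} (π : Equiv.Perm (Fin n)) : Set (Arc n) :=
  {α | ∃ (i : Fin n) (h : (i : ℕ) + 1 < n),
     π ⟨(i : ℕ) + 1, h⟩ < π i ∧ α.p = π ⟨(i : ℕ) + 1, h⟩ ∧ α.q = π i ∧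
     ∀ x : Fin n, x ∈ α.R ↔ ∃ j : Fin n, i < j ∧ π j = x ∧ α.p < x ∧ x < α.q}

/-- The (right weak order) inversion set of a permutation: pairs of values
`a < b` with `a` occurring after `b` in one-line notation. -/
def invSet {n : ℕ} (π : Equiv.Perm (Fin n)) : Set (Fin n × Fin n) :=
  {p | p.1 < p.2 ∧ π.symm p.2 < π.symm p.1}

/-- The right weak order on the symmetric group: containment of inversion sets. -/
def wle {n : ℕ} (u w : Equiv.Perm (Fin n)) : Prop := invSet u ⊆ invSet w

/-- `m` is the join of `x` and `y` in weak order. -/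
def IsLUBw {n : ℕ} (x y m : Equiv.Perm (Fin n)) : Prop :=
  wle x m ∧ wle y m ∧ ∀ b, wle x b → wle y b → wle m b

/-- `m` is the meet of `x` and `y` in weak order. -/
def IsGLBw {n : ℕ} (x y m : Equiv.Perm (Fin n)) : Prop :=
  wle m x ∧ wle m y ∧ ∀ b, wle b x → wle b y → wle b m

/-- A lattice congruence of the weak order: an equivalence relation compatible
with joins and meets. -/
def IsWeakCong {n : ℕ} (r : Setoid (Equiv.Perm (Fin n))) : Prop :=
  (∀ x1 x2 y1 y2 m1 m2, r.r x1 x2 → r.r y1 y2 →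
      IsLUBw x1 y1 m1 → IsLUBw x2 y2 m2 → r.r m1 m2) ∧
  (∀ x1 x2 y1 y2 m1 m2, r.r x1 x2 → r.r y1 y2 →
      IsGLBw x1 y1 m1 → IsGLBw x2 y2 m2 → r.r m1 m2)

/-- `u` is covered by `w` in the weak order. -/
def CovW {n : ℕ} (u w : Equiv.Perm (Fin n)) : Prop :=
  wle u w ∧ u ≠ w ∧ ∀ v, wle u v → wle v w → v = u ∨ v = w

/-- A join-irreducible permutation `j` is contracted by the congruence `r`
if it is congruent to the unique element it covers. -/
def ContractsJ {n : ℕ} (r : Setoid (Equiv.Perm (Fin n))) (j : Equiv.Perm (Fin n)) : Prop :=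
  ∃ y, CovW y j ∧ r.r j y

/-- `α'` is a subarc of `α`. -/
def Subarc {n : ℕ} (α' α : Arc n) : Prop :=
  α.p ≤ α'.p ∧ α'.q ≤ α.q ∧
    ∀ x : Fin n, x ∈ α'.R ↔ (x ∈ α.R ∧ α'.p < x ∧ x < α'.q)

section
variable {n : ℕ}
open Equiv Relation
namespace WS


lemma mem_invSet {π : Equiv.Perm (Fin n)} {a b : Fin n} :
    (a, b) ∈ invSet π ↔ a < b ∧ π.symm b < π.symm a := Iff.rfl

lemma invSet_lt {π : Equiv.Perm (Fin n)} {a b : Fin n} (h : (a, b) ∈ invSet π) : a < b := h.1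

lemma invSet_trans {π : Equiv.Perm (Fin n)} {a b c : Fin n}
    (h1 : (a, b) ∈ invSet π) (h2 : (b, c) ∈ invSet π) : (a, c) ∈ invSet π :=
  ⟨h1.1.trans h2.1, h2.2.trans h1.2⟩

lemma invSet_split {π : Equiv.Perm (Fin n)} {a c : Fin n} (h : (a, c) ∈ invSet π)
    {b : Fin n} (h1 : a < b) (h2 : b < c) :
    (a, b) ∈ invSet π ∨ (b, c) ∈ invSet π := by
  rcases lt_or_ge (π.symm b) (π.symm a) with hc | hc
  · exact Or.inl ⟨h1, hc⟩
  · exact Or.inr ⟨h2, lt_of_lt_of_le h.2 hc⟩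

lemma wle_refl (π : Equiv.Perm (Fin n)) : wle π π := le_refl _

lemma wle_trans {u v w : Equiv.Perm (Fin n)} (h1 : wle u v) (h2 : wle v w) : wle u w :=
  Set.Subset.trans h1 h2

/-- positions are determined by the inversion set -/
lemma symm_eq_ncard (π : Equiv.Perm (Fin n)) (v : Fin n) :
    (π.symm v : ℕ) = Set.ncard {w | w ≠ v ∧ ((w < v ∧ (w, v) ∉ invSet π) ∨ (v < w ∧ (v, w) ∈ invSet π))} := by
  have hset : {w | w ≠ v ∧ ((w < v ∧ (w, v) ∉ invSet π) ∨ (v < w ∧ (v, w) ∈ invSet π))}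
      = {w | π.symm w < π.symm v} := by
    ext w
    simp only [Set.mem_setOf_eq, mem_invSet]
    constructor
    · rintro ⟨hne, (⟨hlt, hni⟩ | ⟨hlt, _, hi⟩)⟩
      · rcases lt_or_ge (π.symm w) (π.symm v) with h | h
        · exact h
        · exact absurd ⟨hlt, lt_of_le_of_ne h (fun he => hne (π.symm.injective he.symm))⟩ hni
      · exact hi
    · intro h
      have hne : w ≠ v := fun he => absurd h (by simp [he])
      refine ⟨hne, ?_⟩
      rcases lt_or_gt_of_ne hne with hlt | hlt
      · exact Or.inl ⟨hlt, fun hc => absurd (hc.2.trans h) (lt_irrefl _)⟩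
      · exact Or.inr ⟨hlt, hlt, h⟩
  rw [hset]
  have himg : {w | π.symm w < π.symm v} = π '' (Set.Iio (π.symm v)) := by
    ext w
    simp only [Set.mem_setOf_eq, Set.mem_image, Set.mem_Iio]
    constructor
    · intro h; exact ⟨π.symm w, h, π.apply_symm_apply w⟩
    · rintro ⟨u, hu, rfl⟩; simpa using hu
  rw [himg, Set.ncard_image_of_injective _ π.injective]
  rw [← Finset.coe_Iio, Set.ncard_coe_finset, Fin.card_Iio]

lemma invSet_inj {π σ : Equiv.Perm (Fin n)} (h : invSet π = invSet σ) : π = σ := by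
  have hsymm : ∀ v, π.symm v = σ.symm v := by
    intro v
    have := symm_eq_ncard π v
    rw [h, ← symm_eq_ncard σ v] at this
    exact Fin.ext this
  refine Equiv.ext fun x => ?_
  have h1 := hsymm (π x)
  rw [Equiv.symm_apply_apply] at h1
  calc π x = σ (σ.symm (π x)) := (σ.apply_symm_apply _).symm
    _ = σ x := by rw [← h1]

lemma wle_antisymm' {π σ : Equiv.Perm (Fin n)} (h1 : wle π σ) (h2 : wle σ π) : π = σ :=
  invSet_inj (Set.Subset.antisymm h1 h2)



/-- `S`-order: `w` comes before `v`. -/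
def ord (S : Set (Fin n × Fin n)) (w v : Fin n) : Prop :=
  (w < v ∧ (w, v) ∉ S) ∨ (v < w ∧ (v, w) ∈ S)

/-- A set of increasing pairs that is transitively closed and co-closed. -/
structure IsInvSet (S : Set (Fin n × Fin n)) : Prop where
  lt : ∀ {a b}, (a, b) ∈ S → a < b
  trans : ∀ {a b c}, (a, b) ∈ S → (b, c) ∈ S → (a, c) ∈ S
  split : ∀ {a c}, (a, c) ∈ S → ∀ {b}, a < b → b < c → (a, b) ∈ S ∨ (b, c) ∈ S

variable {S : Set (Fin n × Fin n)}

lemma ord_irrefl (v : Fin n) : ¬ ord S v v := by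
  rintro (⟨h, _⟩ | ⟨h, _⟩) <;> exact absurd h (lt_irrefl _)

lemma ord_total {w v : Fin n} (h : w ≠ v) : ord S w v ∨ ord S v w := by
  rcases lt_or_gt_of_ne h with hlt | hlt
  · by_cases hs : (w, v) ∈ S
    · exact Or.inr (Or.inr ⟨hlt, hs⟩)
    · exact Or.inl (Or.inl ⟨hlt, hs⟩)
  · by_cases hs : (v, w) ∈ S
    · exact Or.inl (Or.inr ⟨hlt, hs⟩)
    · exact Or.inr (Or.inl ⟨hlt, hs⟩)

lemma ord_trans (hS : IsInvSet S) {u v w : Fin n} (h1 : ord S u v) (h2 : ord S v w) :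
    ord S u w := by
  have huv : u ≠ v := by rintro rfl; exact ord_irrefl _ h1
  have hvw : v ≠ w := by rintro rfl; exact ord_irrefl _ h2
  rcases eq_or_ne u w with rfl | huw
  · exfalso
    rcases h1 with ⟨hlt1, hn1⟩ | ⟨hlt1, hm1⟩ <;> rcases h2 with ⟨hlt2, hn2⟩ | ⟨hlt2, hm2⟩
    · exact absurd (hlt1.trans hlt2) (lt_irrefl _)
    · exact hn1 hm2
    · exact hn2 hm1
    · exact absurd (hlt1.trans hlt2) (lt_irrefl _)
  rcases h1 with ⟨hlt1, hn1⟩ | ⟨hlt1, hm1⟩ <;> rcases h2 with ⟨hlt2, hn2⟩ | ⟨hlt2, hm2⟩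
  · -- u<v ∉S, v<w ∉S
    refine Or.inl ⟨hlt1.trans hlt2, fun hc => ?_⟩
    rcases hS.split hc hlt1 hlt2 with h | h
    · exact hn1 h
    · exact hn2 h
  · -- u<v ∉S, w<v (w,v)∈S
    rcases lt_or_gt_of_ne huw with hlt | hlt
    · refine Or.inl ⟨hlt, fun hc => hn1 (hS.trans hc hm2)⟩
    · -- w < u < v, (w,v) ∈ S
      refine Or.inr ⟨hlt, ?_⟩
      rcases hS.split hm2 hlt hlt1 with h | h
      · exact h
      · exact absurd h hn1
  · -- v<u (v,u)∈S, v<w ∉S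
    rcases lt_or_gt_of_ne huw with hlt | hlt
    · -- v < u < w? no: u < w; v<u: (v,u) ∈ S; (v,w) ∉ S
      refine Or.inl ⟨hlt, fun hc => hn2 (hS.trans hm1 hc)⟩
    · -- w < u, v < w < u, (v,u) ∈ S
      refine Or.inr ⟨hlt, ?_⟩
      rcases hS.split hm1 hlt2 hlt with h | h
      · exact absurd h hn2
      · exact h
  · -- v<u ∈S, w<v ∈S
    exact Or.inr ⟨hlt2.trans hlt1, hS.trans hm2 hm1⟩

lemma ncard_ord_lt (v : Fin n) : ({w | ord S w v}).ncard < n := by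
  have hsub : {w | ord S w v} ⊂ Set.univ := by
    rw [Set.ssubset_univ_iff]
    intro hc
    have : v ∈ {w | ord S w v} := by rw [hc]; trivial
    exact ord_irrefl v this
  have := Set.ncard_lt_ncard hsub (Set.finite_univ)
  simpa [Set.ncard_univ] using this

noncomputable def posOf (S : Set (Fin n × Fin n)) (v : Fin n) : Fin n :=
  ⟨({w | ord S w v}).ncard, ncard_ord_lt v⟩

lemma posOf_lt_posOf (hS : IsInvSet S) {u v : Fin n} (h : ord S u v) :
    posOf S u < posOf S v := by
  have hsub : {w | ord S w u} ⊂ {w | ord S w v} := by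
    constructor
    · intro w hw; exact ord_trans hS hw h
    · intro hc
      exact ord_irrefl u (hc h)
  exact Set.ncard_lt_ncard hsub (Set.toFinite _)

lemma posOf_injective (hS : IsInvSet S) : Function.Injective (posOf S) := by
  intro u v h
  by_contra hne
  rcases ord_total hne with ho | ho
  · exact absurd h (ne_of_lt (posOf_lt_posOf hS ho))
  · exact absurd h.symm (ne_of_lt (posOf_lt_posOf hS ho))

noncomputable def permOfInv (S : Set (Fin n × Fin n)) (hS : IsInvSet S) : Equiv.Perm (Fin n) :=
  (Equiv.ofBijective (posOf S) (Finite.injective_iff_bijective.mp (posOf_injective hS))).symm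

lemma permOfInv_symm_apply (S : Set (Fin n × Fin n)) (hS : IsInvSet S) (v : Fin n) :
    (permOfInv S hS).symm v = posOf S v := by
  simp [permOfInv]

lemma invSet_permOfInv (S : Set (Fin n × Fin n)) (hS : IsInvSet S) :
    invSet (permOfInv S hS) = S := by
  ext ⟨a, b⟩
  simp only [invSet, Set.mem_setOf_eq, permOfInv_symm_apply]
  constructor
  · rintro ⟨hab, hpos⟩
    by_contra hns
    exact absurd (posOf_lt_posOf hS (Or.inl ⟨hab, hns⟩)) (fun hc => absurd (hpos.trans hc) (lt_irrefl _))
  · intro hs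
    have hab : a < b := hS.lt hs
    exact ⟨hab, posOf_lt_posOf hS (Or.inr ⟨hab, hs⟩)⟩


/-- generic: transitive closure of a "locally co-closed" step relation is an inversion set -/
def TGS (s : Fin n → Fin n → Prop) : Set (Fin n × Fin n) := {pr | TransGen s pr.1 pr.2}

structure StepOK (s : Fin n → Fin n → Prop) : Prop where
  lt : ∀ {a b}, s a b → a < b
  split : ∀ {a c}, s a c → ∀ {b}, a < b → b < c → s a b ∨ s b c

lemma TGS_lt' {s : Fin n → Fin n → Prop} (hs : StepOK s) {a b : Fin n}
    (h : TransGen s a b) : a < b := by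
  induction h with
  | single h => exact hs.lt h
  | tail _ h ih => exact ih.trans (hs.lt h)

lemma TGS_lt {s : Fin n → Fin n → Prop} (hs : StepOK s) {a b : Fin n}
    (h : (a, b) ∈ TGS s) : a < b := TGS_lt' hs h

lemma TGS_split' {s : Fin n → Fin n → Prop} (hs : StepOK s) {a c : Fin n}
    (h : TransGen s a c) : ∀ {b : Fin n}, a < b → b < c →
      TransGen s a b ∨ TransGen s b c := by
  induction h with
  | single h =>
    intro b h1 h2
    rcases hs.split h h1 h2 with h' | h'
    · exact Or.inl (TransGen.single h')
    · exact Or.inr (TransGen.single h')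
  | @tail c' c hac' hstep ih =>
    intro b h1 h2
    rcases lt_trichotomy b c' with hb | hb | hb
    · rcases ih h1 hb with h' | h'
      · exact Or.inl h'
      · exact Or.inr (TransGen.tail h' hstep)
    · subst hb; exact Or.inl hac'
    · rcases hs.split hstep hb h2 with h' | h'
      · exact Or.inl (TransGen.tail hac' h')
      · exact Or.inr (TransGen.single h')

lemma TGS_split {s : Fin n → Fin n → Prop} (hs : StepOK s) {a c : Fin n}
    (h : (a, c) ∈ TGS s) {b : Fin n} (h1 : a < b) (h2 : b < c) :
      (a, b) ∈ TGS s ∨ (b, c) ∈ TGS s := TGS_split' hs h h1 h2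

lemma TGS_isInvSet {s : Fin n → Fin n → Prop} (hs : StepOK s) : IsInvSet (TGS s) where
  lt := fun h => TGS_lt hs h
  trans := fun h1 h2 => TransGen.trans h1 h2
  split := by intro a c h b h1 h2; exact TGS_split hs h h1 h2

/-- the join step relation -/
def jstep (x y : Equiv.Perm (Fin n)) (a b : Fin n) : Prop :=
  (a, b) ∈ invSet x ∨ (a, b) ∈ invSet y

lemma jstep_ok (x y : Equiv.Perm (Fin n)) : StepOK (jstep x y) where
  lt := fun h => by rcases h with h | h <;> exact invSet_lt h
  split := by
    intro a c h b h1 h2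
    rcases h with h | h
    · rcases invSet_split h h1 h2 with h' | h'
      · exact Or.inl (Or.inl h')
      · exact Or.inr (Or.inl h')
    · rcases invSet_split h h1 h2 with h' | h'
      · exact Or.inl (Or.inr h')
      · exact Or.inr (Or.inr h')

noncomputable def joinP (x y : Equiv.Perm (Fin n)) : Equiv.Perm (Fin n) :=
  permOfInv (TGS (jstep x y)) (TGS_isInvSet (jstep_ok x y))

lemma invSet_joinP (x y : Equiv.Perm (Fin n)) :
    invSet (joinP x y) = TGS (jstep x y) := invSet_permOfInv _ _

lemma le_joinP_left (x y : Equiv.Perm (Fin n)) : wle x (joinP x y) := by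
  rw [wle, invSet_joinP]
  exact fun pr h => TransGen.single (Or.inl h)

lemma le_joinP_right (x y : Equiv.Perm (Fin n)) : wle y (joinP x y) := by
  rw [wle, invSet_joinP]
  exact fun pr h => TransGen.single (Or.inr h)

lemma joinP_le {x y b : Equiv.Perm (Fin n)} (hx : wle x b) (hy : wle y b) :
    wle (joinP x y) b := by
  rw [wle, invSet_joinP]
  rintro ⟨u, v⟩ h
  simp only [TGS, Set.mem_setOf_eq] at h
  induction h with
  | single h => rcases h with h | h; exacts [hx h, hy h]
  | tail _ h ih =>
    rcases h with h | h
    · exact invSet_trans ih (hx h)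
    · exact invSet_trans ih (hy h)

lemma isLUBw_joinP (x y : Equiv.Perm (Fin n)) : IsLUBw x y (joinP x y) :=
  ⟨le_joinP_left x y, le_joinP_right x y, fun _ hx hy => joinP_le hx hy⟩

lemma IsLUBw.eq_joinP {x y m : Equiv.Perm (Fin n)} (h : IsLUBw x y m) : m = joinP x y :=
  wle_antisymm' (h.2.2 _ (le_joinP_left x y) (le_joinP_right x y))
    (joinP_le h.1 h.2.1)

/-- reversal -/
def revp (π : Equiv.Perm (Fin n)) : Equiv.Perm (Fin n) := Fin.revPerm.trans π

lemma revp_symm_apply (π : Equiv.Perm (Fin n)) (v : Fin n) :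
    (revp π).symm v = (π.symm v).rev := rfl

lemma mem_invSet_revp {π : Equiv.Perm (Fin n)} {a b : Fin n} :
    (a, b) ∈ invSet (revp π) ↔ a < b ∧ (a, b) ∉ invSet π := by
  simp only [invSet, Set.mem_setOf_eq, revp_symm_apply, Fin.rev_lt_rev]
  constructor
  · rintro ⟨hab, h⟩
    exact ⟨hab, fun hc => absurd (h.trans hc.2) (lt_irrefl _)⟩
  · rintro ⟨hab, h⟩
    refine ⟨hab, lt_of_le_of_ne ?_ ?_⟩
    · by_contra hc
      exact h ⟨hab, lt_of_not_ge hc⟩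
    · intro hc
      exact absurd (π.symm.injective hc) (ne_of_lt hab)

lemma revp_revp (π : Equiv.Perm (Fin n)) : revp (revp π) = π := by
  refine Equiv.ext fun x => ?_
  simp [revp, Fin.rev_rev]

lemma wle_revp {u w : Equiv.Perm (Fin n)} : wle (revp w) (revp u) ↔ wle u w := by
  constructor
  · intro h ⟨a, b⟩ hm
    by_contra hc
    have : (a, b) ∈ invSet (revp w) := mem_invSet_revp.mpr ⟨invSet_lt hm, hc⟩
    exact (mem_invSet_revp.mp (h this)).2 hm
  · intro h ⟨a, b⟩ hm
    rw [mem_invSet_revp] at hm ⊢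
    exact ⟨hm.1, fun hc => hm.2 (h hc)⟩

lemma isGLBw_iff_revp {x y m : Equiv.Perm (Fin n)} :
    IsGLBw x y m ↔ IsLUBw (revp x) (revp y) (revp m) := by
  constructor
  · rintro ⟨h1, h2, h3⟩
    refine ⟨wle_revp.mpr h1, wle_revp.mpr h2, fun b hb1 hb2 => ?_⟩
    have hb1' : wle (revp b) x := by rw [← revp_revp b] at hb1; exact wle_revp.mp hb1
    have hb2' : wle (revp b) y := by rw [← revp_revp b] at hb2; exact wle_revp.mp hb2
    have := h3 (revp b) hb1' hb2'
    rw [← revp_revp b]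
    exact wle_revp.mpr this
  · rintro ⟨h1, h2, h3⟩
    refine ⟨wle_revp.mp h1, wle_revp.mp h2, fun b hb1 hb2 => ?_⟩
    have := h3 (revp b) (wle_revp.mpr hb1) (wle_revp.mpr hb2)
    rw [← revp_revp b, ← revp_revp m] at this ⊢
    exact wle_revp.mp this

noncomputable def meetP (x y : Equiv.Perm (Fin n)) : Equiv.Perm (Fin n) :=
  revp (joinP (revp x) (revp y))

lemma isGLBw_meetP (x y : Equiv.Perm (Fin n)) : IsGLBw x y (meetP x y) := by
  rw [isGLBw_iff_revp]
  rw [meetP, revp_revp]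
  exact isLUBw_joinP _ _


@[ext] lemma Arc.ext' {α β : Arc n} (hp : α.p = β.p) (hq : α.q = β.q) (hR : α.R = β.R) :
    α = β := by
  cases α; cases β; simp_all

/-- sources: bottom endpoint and right points -/
def srcs (α : Arc n) : Set (Fin n) := {u | u = α.p ∨ u ∈ α.R}

/-- targets: top endpoint and left points -/
def tgts (α : Arc n) : Set (Fin n) := {v | v = α.q ∨ (α.p < v ∧ v < α.q ∧ v ∉ α.R)}

def SA (α : Arc n) : Set (Fin n × Fin n) :=
  {pr | pr.1 < pr.2 ∧ pr.1 ∈ srcs α ∧ pr.2 ∈ tgts α}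

lemma mem_SA {α : Arc n} {a b : Fin n} :
    (a, b) ∈ SA α ↔ a < b ∧ a ∈ srcs α ∧ b ∈ tgts α := Iff.rfl

lemma srcs_le {α : Arc n} {u : Fin n} (h : u ∈ srcs α) : α.p ≤ u := by
  rcases h with rfl | h
  · exact le_refl _
  · exact le_of_lt (α.hR u h).1

lemma srcs_lt_q {α : Arc n} {u : Fin n} (h : u ∈ srcs α) : u < α.q := by
  rcases h with rfl | h
  · exact α.hpq
  · exact (α.hR u h).2

lemma tgts_le {α : Arc n} {v : Fin n} (h : v ∈ tgts α) : v ≤ α.q := by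
  rcases h with rfl | h
  · exact le_refl _
  · exact le_of_lt h.2.1

lemma p_lt_tgts {α : Arc n} {v : Fin n} (h : v ∈ tgts α) : α.p < v := by
  rcases h with rfl | h
  · exact α.hpq
  · exact h.1

lemma not_src_tgt {α : Arc n} {v : Fin n} (h1 : v ∈ srcs α) (h2 : v ∈ tgts α) : False := by
  rcases h1 with rfl | h1
  · exact absurd (p_lt_tgts h2) (lt_irrefl _)
  · rcases h2 with rfl | h2
    · exact absurd (α.hR _ h1).2 (lt_irrefl _)
    · exact h2.2.2 h1

lemma SA_isInvSet (α : Arc n) : IsInvSet (SA α) where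
  lt := fun h => h.1
  trans := fun h1 h2 => absurd h2.2.1 (fun hc => not_src_tgt hc h1.2.2)
  split := by
    intro a c h b h1 h2
    have hb1 : α.p < b := lt_of_le_of_lt (srcs_le h.2.1) h1
    have hb2 : b < α.q := lt_of_lt_of_le h2 (tgts_le h.2.2)
    by_cases hbR : b ∈ α.R
    · exact Or.inr ⟨h2, Or.inr hbR, h.2.2⟩
    · exact Or.inl ⟨h1, h.2.1, Or.inr ⟨hb1, hb2, hbR⟩⟩

noncomputable def jp (α : Arc n) : Equiv.Perm (Fin n) := permOfInv (SA α) (SA_isInvSet α)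

lemma invSet_jp (α : Arc n) : invSet (jp α) = SA α := invSet_permOfInv _ _

lemma top_mem_SA (α : Arc n) : (α.p, α.q) ∈ SA α :=
  ⟨α.hpq, Or.inl rfl, Or.inl rfl⟩

/-- the lower sets -/
def SA' (α : Arc n) : Set (Fin n × Fin n) := SA α \ {(α.p, α.q)}

lemma SA'_isInvSet (α : Arc n) : IsInvSet (SA' α) where
  lt := fun h => h.1.1
  trans := fun h1 h2 => absurd h2.1.2.1 (fun hc => not_src_tgt hc h1.1.2.2)
  split := by
    intro a c h b h1 h2
    rcases (SA_isInvSet α).split h.1 h1 h2 with h' | h'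
    · refine Or.inl ⟨h', fun hc => ?_⟩
      have : b = α.q := congrArg Prod.snd hc
      exact absurd (lt_of_lt_of_le h2 (tgts_le h.1.2.2)) (by rw [this]; exact lt_irrefl _)
    · refine Or.inr ⟨h', fun hc => ?_⟩
      have : b = α.p := congrArg Prod.fst hc
      exact absurd (lt_of_le_of_lt (srcs_le h.1.2.1) h1) (by rw [this]; exact lt_irrefl _)

noncomputable def jlow (α : Arc n) : Equiv.Perm (Fin n) := permOfInv (SA' α) (SA'_isInvSet α)

lemma invSet_jlow (α : Arc n) : invSet (jlow α) = SA' α := invSet_permOfInv _ _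

lemma jlow_le_jp (α : Arc n) : wle (jlow α) (jp α) := by
  rw [wle, invSet_jlow, invSet_jp]; exact Set.diff_subset

lemma jlow_ne_jp (α : Arc n) : jlow α ≠ jp α := by
  intro h
  have := congrArg invSet h
  rw [invSet_jlow, invSet_jp] at this
  have htop := top_mem_SA α
  rw [← this] at htop
  exact htop.2 rfl

/-- absorb: any perm strictly below `jp α` is below `jlow α` -/
lemma absorb {α : Arc n} {v : Equiv.Perm (Fin n)} (hle : wle v (jp α)) :
    v = jp α ∨ wle v (jlow α) := by
  rw [wle, invSet_jp] at hle
  by_cases htop : (α.p, α.q) ∈ invSet v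
  · left
    apply invSet_inj
    rw [invSet_jp]
    refine Set.Subset.antisymm hle ?_
    -- show SA α ⊆ invSet v
    have hRq : ∀ u ∈ α.R, (u, α.q) ∈ invSet v := by
      intro u hu
      rcases invSet_split htop (α.hR u hu).1 (α.hR u hu).2 with h' | h'
      · exact absurd (hle h').2.2 (fun hc => not_src_tgt (Or.inr hu) hc)
      · exact h'
    have hpL : ∀ w, w ∈ tgts α → w ≠ α.q → (α.p, w) ∈ invSet v := by
      intro w hw hne
      have hw' : α.p < w ∧ w < α.q ∧ w ∉ α.R := by
        rcases hw with rfl | hw; · exact absurd rfl hne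
        · exact hw
      rcases invSet_split htop hw'.1 hw'.2.1 with h' | h'
      · exact h'
      · exact absurd (hle h') (fun hc => not_src_tgt hc.2.1 hw)
    rintro ⟨a, b⟩ ⟨hab, ha, hb⟩
    rcases ha with rfl | ha
    · rcases hb with rfl | hb
      · exact htop
      · exact hpL b (Or.inr hb) (fun hc => absurd hb.2.1 (by rw [hc]; exact lt_irrefl _))
    · rcases hb with rfl | hb
      · exact hRq a ha
      · -- a ∈ R, b ∈ L, a < b : from (a,q) split at b
        rcases invSet_split (hRq a ha) hab hb.2.1 with h' | h'
        · exact h'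
        · exact absurd (hle h') (fun hc => not_src_tgt hc.2.1 (Or.inr hb))
  · right
    rw [wle, invSet_jlow]
    intro pr hpr
    refine ⟨hle hpr, fun hc => ?_⟩
    simp only [Set.mem_singleton_iff] at hc
    rw [hc] at hpr
    exact htop hpr

lemma covw_jlow (α : Arc n) : CovW (jlow α) (jp α) := by
  refine ⟨jlow_le_jp α, jlow_ne_jp α, fun v hv1 hv2 => ?_⟩
  rcases absorb hv2 with h | h
  · exact Or.inr h
  · left
    apply invSet_inj
    exact Set.Subset.antisymm h hv1

lemma contractsJ_iff {r : Setoid (Equiv.Perm (Fin n))} {α : Arc n} :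
    ContractsJ r (jp α) ↔ r.r (jp α) (jlow α) := by
  constructor
  · rintro ⟨y, hcov, hr⟩
    have hy : y = jlow α := by
      rcases absorb hcov.1 with h | h
      · exact absurd h hcov.2.1
      · rcases hcov.2.2 (jlow α) h (jlow_le_jp α) with h' | h'
        · exact h'.symm
        · exact absurd h' (jlow_ne_jp α)
    rw [← hy]; exact hr
  · intro h
    exact ⟨jlow α, covw_jlow α, h⟩

/-- subarc constructor -/
def subArc (α : Arc n) (s t : Fin n) (h1 : s < t) (h2 : α.p ≤ s) (h3 : t ≤ α.q) : Arc n :=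
  ⟨s, t, α.R.filter (fun x => s < x ∧ x < t), h1, by
    intro i hi
    simp only [Finset.mem_filter] at hi
    exact hi.2⟩

@[simp] lemma subArc_p (α : Arc n) (s t h1 h2 h3) : (subArc α s t h1 h2 h3).p = s := rfl
@[simp] lemma subArc_q (α : Arc n) (s t h1 h2 h3) : (subArc α s t h1 h2 h3).q = t := rfl
lemma mem_subArc_R {α : Arc n} {s t h1 h2 h3} {x : Fin n} :
    x ∈ (subArc α s t h1 h2 h3).R ↔ x ∈ α.R ∧ s < x ∧ x < t := by
  simp [subArc]

lemma subarc_subArc (α : Arc n) (s t h1 h2 h3) : Subarc (subArc α s t h1 h2 h3) α :=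
  ⟨h2, h3, fun x => by simp [mem_subArc_R]⟩

lemma subArc_subArc (α : Arc n) (s t h1 h2 h3) (s' t' h1' h2' h3') :
    subArc (subArc α s t h1 h2 h3) s' t' h1' h2' h3' =
      subArc α s' t' h1' (le_trans h2 h2') (le_trans h3' h3) := by
  refine Arc.ext' rfl rfl ?_
  ext x
  simp only [mem_subArc_R]
  constructor
  · rintro ⟨⟨hx, _, _⟩, hx2⟩; exact ⟨hx, hx2⟩
  · rintro ⟨hx, hs, ht⟩
    exact ⟨⟨hx, lt_of_le_of_lt h2' hs, lt_of_lt_of_le ht h3'⟩, hs, ht⟩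

lemma subarc_eq {β γ : Arc n} (h : Subarc β γ) (hp : β.p = γ.p) (hq : β.q = γ.q) : β = γ := by
  refine Arc.ext' hp hq ?_
  ext x
  rw [h.2.2 x, hp, hq]
  exact ⟨fun h' => h'.1, fun h' => ⟨h', (γ.hR x h').1, (γ.hR x h').2⟩⟩


def Yset (α : Arc n) : Set (Fin n) := {v | v = α.p ∨ v ∈ α.R ∨ α.q < v}

lemma p_mem_Yset (α : Arc n) : α.p ∈ Yset α := Or.inl rfl
lemma q_not_mem_Yset (α : Arc n) : α.q ∉ Yset α := by
  rintro (h | h | h)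
  · exact absurd α.hpq (by rw [h]; exact lt_irrefl _)
  · exact absurd (α.hR _ h).2 (lt_irrefl _)
  · exact absurd h (lt_irrefl _)
lemma Yset_le {α : Arc n} {v : Fin n} (h : v ∈ Yset α) : α.p ≤ v := by
  rcases h with rfl | h | h
  · exact le_refl _
  · exact le_of_lt (α.hR _ h).1
  · exact le_of_lt (α.hpq.trans h)
lemma not_Yset_le_q {α : Arc n} {v : Fin n} (h : v ∉ Yset α) : v ≤ α.q := by
  by_contra hc
  exact h (Or.inr (Or.inr (lt_of_not_ge hc)))
lemma srcs_subset_Yset {α : Arc n} : srcs α ⊆ Yset α := by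
  rintro u (rfl | h)
  · exact Or.inl rfl
  · exact Or.inr (Or.inl h)
lemma tgts_not_Yset {α : Arc n} {v : Fin n} (h : v ∈ tgts α) : v ∉ Yset α := by
  rcases h with rfl | h
  · exact q_not_mem_Yset α
  · rintro (hc | hc | hc)
    · exact absurd h.1 (by rw [hc]; exact lt_irrefl _)
    · exact h.2.2 hc
    · exact absurd (h.2.1.trans hc) (lt_irrefl _)

lemma SA_mem_blocks {α : Arc n} {a b : Fin n} :
    (a, b) ∈ SA α ↔ a < b ∧ a ∈ Yset α ∧ b ∉ Yset α := by
  constructor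
  · rintro ⟨hab, ha, hb⟩
    exact ⟨hab, srcs_subset_Yset ha, tgts_not_Yset hb⟩
  · rintro ⟨hab, ha, hb⟩
    refine ⟨hab, ?_, ?_⟩
    · rcases ha with rfl | ha | ha
      · exact Or.inl rfl
      · exact Or.inr ha
      · exact absurd (lt_of_le_of_lt (not_Yset_le_q hb) (ha.trans hab)) (lt_irrefl _)
    · rcases eq_or_lt_of_le (not_Yset_le_q hb) with rfl | hbq
      · exact Or.inl rfl
      · refine Or.inr ⟨lt_of_le_of_lt (Yset_le ha) hab, hbq, fun hc => hb (Or.inr (Or.inl hc))⟩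

lemma ord_of_XY {α : Arc n} {w v : Fin n} (hw : w ∉ Yset α) (hv : v ∈ Yset α) :
    ord (SA α) w v := by
  rcases lt_trichotomy w v with h | h | h
  · exact Or.inl ⟨h, fun hc => hw (SA_mem_blocks.mp hc).2.1⟩
  · exact absurd hv (h ▸ hw)
  · exact Or.inr ⟨h, SA_mem_blocks.mpr ⟨h, hv, hw⟩⟩

lemma ord_of_YY {α : Arc n} {w v : Fin n} (hw : w ∈ Yset α) (hv : v ∈ Yset α) (h : w < v) :
    ord (SA α) w v :=
  Or.inl ⟨h, fun hc => (SA_mem_blocks.mp hc).2.2 hv⟩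

lemma ord_of_XX {α : Arc n} {w v : Fin n} (hw : w ∉ Yset α) (hv : v ∉ Yset α) (h : w < v) :
    ord (SA α) w v :=
  Or.inl ⟨h, fun hc => hw (SA_mem_blocks.mp hc).2.1⟩

lemma ord_p_set (α : Arc n) : {w | ord (SA α) w α.p} = {w | w ∉ Yset α} := by
  ext w
  simp only [Set.mem_setOf_eq]
  constructor
  · rintro (⟨h, _⟩ | ⟨_, hs⟩)
    · intro hc; exact absurd (lt_of_le_of_lt (Yset_le hc) h) (lt_irrefl _)
    · exact (SA_mem_blocks.mp hs).2.2
  · intro h; exact ord_of_XY h (p_mem_Yset α)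

lemma ord_q_set (α : Arc n) : {w | ord (SA α) w α.q} = {w | w ∉ Yset α} \ {α.q} := by
  ext w
  simp only [Set.mem_setOf_eq, Set.mem_diff, Set.mem_singleton_iff]
  constructor
  · rintro (⟨h, hns⟩ | ⟨h, hs⟩)
    · refine ⟨fun hc => ?_, ne_of_lt h⟩
      rcases hc with rfl | hc | hc
      · exact hns (SA_mem_blocks.mpr ⟨h, p_mem_Yset α, q_not_mem_Yset α⟩)
      · exact hns (SA_mem_blocks.mpr ⟨h, Or.inr (Or.inl hc), q_not_mem_Yset α⟩)
      · exact absurd (hc.trans h) (lt_irrefl _)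
    · exact absurd (SA_mem_blocks.mp hs).2.1 (q_not_mem_Yset α)
  · rintro ⟨h, hne⟩
    exact ord_of_XX h (q_not_mem_Yset α) (lt_of_le_of_ne (not_Yset_le_q h) hne)

lemma posP_eq_posQ_succ (α : Arc n) :
    (posOf (SA α) α.p : ℕ) = (posOf (SA α) α.q : ℕ) + 1 := by
  show ({w | ord (SA α) w α.p}).ncard = ({w | ord (SA α) w α.q}).ncard + 1
  rw [ord_p_set, ord_q_set]
  exact (Set.ncard_diff_singleton_add_one (s := {w | w ∉ Yset α}) (a := α.q)
    (q_not_mem_Yset α) (Set.toFinite _)).symm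

lemma mem_Yset_iff_pos {α : Arc n} {v : Fin n} :
    v ∈ Yset α ↔ posOf (SA α) α.q < posOf (SA α) v := by
  constructor
  · intro h
    exact posOf_lt_posOf (SA_isInvSet α) (ord_of_XY (q_not_mem_Yset α) h)
  · intro h
    by_contra hc
    rcases eq_or_lt_of_le (not_Yset_le_q hc) with rfl | hlt
    · exact absurd h (lt_irrefl _)
    · exact absurd (h.trans (posOf_lt_posOf (SA_isInvSet α) (ord_of_XX hc (q_not_mem_Yset α) hlt)))
        (lt_irrefl _)

lemma descent_unique {α : Arc n} {a b : Fin n} (hab : a < b)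
    (hpos : (posOf (SA α) a : ℕ) = (posOf (SA α) b : ℕ) + 1) :
    a = α.p ∧ b = α.q := by
  have hba : posOf (SA α) b < posOf (SA α) a := by
    rw [Fin.lt_def, hpos]; exact Nat.lt_succ_self _
  have haY : a ∈ Yset α := by
    by_contra ha
    by_cases hb : b ∈ Yset α
    · exact absurd (posOf_lt_posOf (SA_isInvSet α) (ord_of_XY ha hb))
        (fun hc => absurd (hc.trans hba) (lt_irrefl _))
    · exact absurd (posOf_lt_posOf (SA_isInvSet α) (ord_of_XX ha hb hab))
        (fun hc => absurd (hc.trans hba) (lt_irrefl _))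
  have hbX : b ∉ Yset α := by
    intro hb
    exact absurd (posOf_lt_posOf (SA_isInvSet α) (ord_of_YY haY hb hab))
      (fun hc => absurd (hc.trans hba) (lt_irrefl _))
  have hbq : b = α.q := by
    by_contra hne
    have hblt : b < α.q := lt_of_le_of_ne (not_Yset_le_q hbX) hne
    have h1 : posOf (SA α) b < posOf (SA α) α.q :=
      posOf_lt_posOf (SA_isInvSet α) (ord_of_XX hbX (q_not_mem_Yset α) hblt)
    have h2 : posOf (SA α) α.q < posOf (SA α) a :=
      posOf_lt_posOf (SA_isInvSet α) (ord_of_XY (q_not_mem_Yset α) haY)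
    rw [Fin.lt_def] at h1 h2
    omega
  refine ⟨?_, hbq⟩
  apply posOf_injective (SA_isInvSet α)
  apply Fin.ext
  rw [hpos, hbq, ← posP_eq_posQ_succ α]

/-- any permutation whose inversion set is `SA α` has positions given by `posOf` -/
lemma symm_eq_posOf {α : Arc n} {j : Equiv.Perm (Fin n)} (h : invSet j = SA α) (v : Fin n) :
    j.symm v = posOf (SA α) v := by
  apply Fin.ext
  rw [symm_eq_ncard j v, h]
  congr 1
  ext w
  simp only [Set.mem_setOf_eq, ord]
  constructor
  · rintro ⟨hne, h'⟩; exact h'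
  · rintro (⟨h1, h2⟩ | ⟨h1, h2⟩)
    · exact ⟨ne_of_lt h1, Or.inl ⟨h1, h2⟩⟩
    · exact ⟨(ne_of_lt h1).symm, Or.inr ⟨h1, h2⟩⟩

theorem diagram_of_invSet {α : Arc n} {j : Equiv.Perm (Fin n)} (h : invSet j = SA α) :
    diagram j = {α} := by
  have hpos : ∀ v, j.symm v = posOf (SA α) v := symm_eq_posOf h
  set i : Fin n := j.symm α.q with hi
  have hiq : j i = α.q := j.apply_symm_apply _
  have hip : (i : ℕ) + 1 = ((j.symm α.p : Fin n) : ℕ) := by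
    rw [hi, hpos, hpos]
    exact (posP_eq_posQ_succ α).symm
  have hlt : (i : ℕ) + 1 < n := by rw [hip]; exact (j.symm α.p).isLt
  have hfin : (⟨(i : ℕ) + 1, hlt⟩ : Fin n) = j.symm α.p := Fin.ext hip
  have hipval : j ⟨(i : ℕ) + 1, hlt⟩ = α.p := by rw [hfin]; exact j.apply_symm_apply _
  have hYiff : ∀ x, x ∈ Yset α ↔ i < j.symm x := by
    intro x
    rw [hpos, hi, hpos]
    exact mem_Yset_iff_pos
  have hRchar : ∀ x : Fin n, x ∈ α.R ↔ ∃ l : Fin n, i < l ∧ j l = x ∧ α.p < x ∧ x < α.q := by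
    intro x
    constructor
    · intro hx
      exact ⟨j.symm x, (hYiff x).mp (Or.inr (Or.inl hx)), j.apply_symm_apply _,
        (α.hR _ hx).1, (α.hR _ hx).2⟩
    · rintro ⟨l, hl, rfl, hx1, hx2⟩
      have hxY : j l ∈ Yset α := by
        rw [hYiff]
        rwa [j.symm_apply_apply]
      rcases hxY with hc | hc | hc
      · exact absurd hx1 (by rw [hc]; exact lt_irrefl _)
      · exact hc
      · exact absurd (hx2.trans hc) (lt_irrefl _)
  rw [Set.eq_singleton_iff_unique_mem]
  constructor
  · exact ⟨i, hlt, by rw [hipval, hiq]; exact α.hpq, hipval.symm, hiq.symm, hRchar⟩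
  · rintro β ⟨i', hlt', hdesc, hp', hq', hRc⟩
    set a := j ⟨(i' : ℕ) + 1, hlt'⟩ with ha
    set b := j i' with hb
    have hposa : (j.symm a : ℕ) = (i' : ℕ) + 1 := by rw [ha, j.symm_apply_apply]
    have hposb : (j.symm b : ℕ) = (i' : ℕ) := by rw [hb, j.symm_apply_apply]
    have hdu := descent_unique hdesc (by rw [← hpos, ← hpos, hposa, hposb])
    have hii : i' = i := by
      rw [hi, ← hdu.2, hb, j.symm_apply_apply]
    refine (Arc.ext' ?_ ?_ ?_).symm
    · rw [hp']; exact hdu.1.symm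
    · rw [hq']; exact hdu.2.symm
    · ext x
      rw [hRc x, hRchar x, hp', hq', hdu.1, hdu.2, hii]

theorem diagram_jp (α : Arc n) : diagram (jp α) = {α} :=
  diagram_of_invSet (invSet_jp α)


theorem invSet_of_diagram {α : Arc n} {j : Equiv.Perm (Fin n)} (hd : diagram j = {α}) :
    invSet j = SA α := by
  have hmemα : α ∈ diagram j := by rw [hd]; rfl
  obtain ⟨i, hlt, hdesc, hp', hq', hRc⟩ := hmemα
  -- no other descent
  have hnod : ∀ (k : Fin n) (hk : (k : ℕ) + 1 < n), k ≠ i → j k < j ⟨(k : ℕ) + 1, hk⟩ := by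
    intro k hk hne
    by_contra hc
    have hkne : (⟨(k : ℕ) + 1, hk⟩ : Fin n) ≠ k := by
      intro h; have := congrArg Fin.val h; simp at this
    have hdesc' : j ⟨(k : ℕ) + 1, hk⟩ < j k := by
      rcases lt_trichotomy (j ⟨(k : ℕ) + 1, hk⟩) (j k) with h | h | h
      · exact h
      · exact absurd (j.injective h) hkne
      · exact absurd h hc
    classical
    set β : Arc n := ⟨j ⟨(k : ℕ) + 1, hk⟩, j k,
      Finset.univ.filter (fun x => j ⟨(k : ℕ) + 1, hk⟩ < x ∧ x < j k ∧ ∃ l, k < l ∧ j l = x),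
      hdesc', by
        intro x hx
        simp only [Finset.mem_filter] at hx
        exact ⟨hx.2.1, hx.2.2.1⟩⟩ with hβ
    have hmemβ : β ∈ diagram j := by
      refine ⟨k, hk, hdesc', rfl, rfl, fun x => ?_⟩
      simp only [hβ, Finset.mem_filter, Finset.mem_univ, true_and]
      constructor
      · rintro ⟨h1, h2, l, h3, h4⟩; exact ⟨l, h3, h4, h1, h2⟩
      · rintro ⟨l, h3, h4, h1, h2⟩; exact ⟨h1, h2, l, h3, h4⟩
    rw [hd, Set.mem_singleton_iff] at hmemβ
    have : β.q = α.q := by rw [hmemβ]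
    have hki : j k = j i := this.trans hq'
    exact hne (j.injective hki)
  -- monotone within blocks
  have claimA : ∀ (d : ℕ) (s t : Fin n), (t : ℕ) = (s : ℕ) + d + 1 →
      ((t : ℕ) ≤ (i : ℕ) ∨ (i : ℕ) < (s : ℕ)) → j s < j t := by
    intro d
    induction d with
    | zero =>
      intro s t ht hcond
      have hk : (s : ℕ) + 1 < n := by rw [← ht]; exact t.isLt
      have hne : s ≠ i := by
        rcases hcond with h | h
        · intro hc; rw [hc] at ht; omega
        · intro hc; rw [hc] at h; omega
      have := hnod s hk hne
      have heq : (⟨(s : ℕ) + 1, hk⟩ : Fin n) = t := Fin.ext (by simp; omega)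
      rwa [heq] at this
    | succ d ih =>
      intro s t ht hcond
      have hmlt : (s : ℕ) + d + 1 < n := by have := t.isLt; omega
      set m : Fin n := ⟨(s : ℕ) + d + 1, hmlt⟩ with hm
      have h1 : j s < j m := by
        apply ih s m (by simp [hm])
        rcases hcond with h | h
        · left; simp [hm]; omega
        · right; exact h
      have h2 : j m < j t := by
        have hk : (m : ℕ) + 1 < n := by simp [hm]; have := t.isLt; omega
        have hne : m ≠ i := by
          rcases hcond with h | h
          · intro hc; rw [← hc] at h; simp [hm] at h; omega
          · intro hc; rw [hc] at hm; have := congrArg Fin.val hm; simp at this; omega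
        have := hnod m hk hne
        have heq : (⟨(m : ℕ) + 1, hk⟩ : Fin n) = t := Fin.ext (by simp [hm]; omega)
        rwa [heq] at this
      exact h1.trans h2
  have mono : ∀ s t : Fin n, (s : ℕ) < (t : ℕ) →
      ((t : ℕ) ≤ (i : ℕ) ∨ (i : ℕ) < (s : ℕ)) → j s < j t := by
    intro s t hst hcond
    exact claimA ((t : ℕ) - (s : ℕ) - 1) s t (by omega) hcond
  have posp : j.symm α.p = (⟨(i : ℕ) + 1, hlt⟩ : Fin n) := by rw [hp', j.symm_apply_apply]
  have posq : j.symm α.q = i := by rw [hq', j.symm_apply_apply]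
  have hYiff : ∀ v : Fin n, v ∈ Yset α ↔ (i : ℕ) < (j.symm v : ℕ) := by
    intro v
    constructor
    · rintro (rfl | hv | hv)
      · rw [posp]; simp
      · obtain ⟨l, hl, hjl, _, _⟩ := (hRc v).mp hv
        have : j.symm v = l := by rw [← hjl, j.symm_apply_apply]
        rw [this]; exact hl
      · by_contra hc
        push_neg at hc
        rcases eq_or_lt_of_le hc with heq | hlt2
        · have : j.symm v = i := Fin.ext heq
          have : v = α.q := by rw [← j.apply_symm_apply v, this, ← hq']
          rw [this] at hv; exact absurd hv (lt_irrefl _)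
        · have := mono (j.symm v) i hlt2 (Or.inl (le_refl _))
          rw [j.apply_symm_apply, ← hq'] at this
          exact absurd (hv.trans this) (lt_irrefl _)
    · intro hv
      rcases Nat.lt_or_ge (i : ℕ) ((j.symm v : ℕ) - 1) with h | h
      · -- pos v > i+1 : α.p < v
        have hplt : ((⟨(i : ℕ) + 1, hlt⟩ : Fin n) : ℕ) < (j.symm v : ℕ) := by simp; omega
        have := mono _ _ hplt (Or.inr (by simp))
        rw [j.apply_symm_apply, ← hp'] at this
        -- α.p < v; now classify v
        rcases lt_trichotomy v α.q with hvq | hvq | hvq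
        · right; left
          exact (hRc v).mpr ⟨j.symm v, by rw [Fin.lt_def]; omega, j.apply_symm_apply _, this, hvq⟩
        · exfalso; rw [hvq, posq] at hv; omega
        · right; right; exact hvq
      · -- pos v = i+1 : v = α.p
        have : j.symm v = (⟨(i : ℕ) + 1, hlt⟩ : Fin n) := Fin.ext (by simp; omega)
        left
        rw [← j.apply_symm_apply v, this, ← hp']
  ext ⟨a, b⟩
  simp only [invSet, Set.mem_setOf_eq]
  rw [SA_mem_blocks]
  constructor
  · rintro ⟨hab, hpos⟩
    rw [Fin.lt_def] at hpos
    have haY : a ∈ Yset α := by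
      by_contra ha
      rw [hYiff] at ha
      push_neg at ha
      by_cases hb : b ∈ Yset α
      · rw [hYiff] at hb; omega
      · rw [hYiff] at hb; push_neg at hb
        have := mono (j.symm b) (j.symm a) hpos (Or.inl ha)
        rw [j.apply_symm_apply, j.apply_symm_apply] at this
        exact absurd (hab.trans this) (lt_irrefl _)
    refine ⟨hab, haY, fun hb => ?_⟩
    rw [hYiff] at haY hb
    have := mono (j.symm b) (j.symm a) hpos (Or.inr hb)
    rw [j.apply_symm_apply, j.apply_symm_apply] at this
    exact absurd (hab.trans this) (lt_irrefl _)
  · rintro ⟨hab, haY, hbX⟩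
    rw [hYiff] at haY
    have hbX' : ¬ ((i : ℕ) < (j.symm b : ℕ)) := fun hc => hbX ((hYiff b).mpr hc)
    push_neg at hbX'
    exact ⟨hab, by rw [Fin.lt_def]; omega⟩

theorem eq_jp_of_diagram {α : Arc n} {j : Equiv.Perm (Fin n)} (hd : diagram j = {α}) :
    j = jp α :=
  invSet_inj (by rw [invSet_of_diagram hd, invSet_jp])


lemma jstep_lt {x y : Equiv.Perm (Fin n)} {a b : Fin n} (h : jstep x y a b) : a < b := by
  rcases h with h | h <;> exact invSet_lt h

lemma CJ_lt {x y : Equiv.Perm (Fin n)} {a b : Fin n} (h : (a, b) ∈ TGS (jstep x y)) : a < b :=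
  TGS_lt (jstep_ok x y) h

lemma CJ_split {x y : Equiv.Perm (Fin n)} {a c : Fin n} (h : (a, c) ∈ TGS (jstep x y))
    {b : Fin n} (h1 : a < b) (h2 : b < c) :
    (a, b) ∈ TGS (jstep x y) ∨ (b, c) ∈ TGS (jstep x y) :=
  TGS_split (jstep_ok x y) h h1 h2

def CJ (x y : Equiv.Perm (Fin n)) : Set (Fin n × Fin n) := TGS (jstep x y)

lemma mem_SA_subArc {γ : Arc n} {s t h1 h2 h3} {u v : Fin n} :
    (u, v) ∈ SA (subArc γ s t h1 h2 h3) ↔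
      u < v ∧ (u = s ∨ (u ∈ γ.R ∧ s < u ∧ u < t)) ∧
        (v = t ∨ (s < v ∧ v < t ∧ v ∉ γ.R)) := by
  simp only [SA, Set.mem_setOf_eq, srcs, tgts, subArc_p, subArc_q, mem_subArc_R]
  constructor
  · rintro ⟨huv, hu, hv⟩
    refine ⟨huv, ?_, ?_⟩
    · rcases hu with h | h
      · exact Or.inl h
      · exact Or.inr h
    · rcases hv with h | ⟨hv1, hv2, hv3⟩
      · exact Or.inl h
      · exact Or.inr ⟨hv1, hv2, fun hc => hv3 ⟨hc, hv1, hv2⟩⟩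
  · rintro ⟨huv, hu, hv⟩
    refine ⟨huv, ?_, ?_⟩
    · rcases hu with h | h
      · exact Or.inl h
      · exact Or.inr h
    · rcases hv with h | ⟨hv1, hv2, hv3⟩
      · exact Or.inl h
      · exact Or.inr ⟨hv1, hv2, fun hc => hv3 hc.1⟩

/-- decompositions of the interval `[s,t]` of `γ` into subarc pieces satisfying `Q` -/
inductive DecB (γ : Arc n) (Q : Arc n → Prop) : Fin n → Fin n → Prop
  | single : ∀ (s t : Fin n) (h1 : s < t) (h2 : γ.p ≤ s) (h3 : t ≤ γ.q),
      Q (subArc γ s t h1 h2 h3) → DecB γ Q s t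
  | trans : ∀ (s t u : Fin n), DecB γ Q s t → DecB γ Q t u → DecB γ Q s u

lemma DecB_lt {γ : Arc n} {Q : Arc n → Prop} {s t : Fin n} (h : DecB γ Q s t) : s < t := by
  induction h with
  | single s t h1 _ _ _ => exact h1
  | trans s t u _ _ ih1 ih2 => exact ih1.trans ih2

lemma DecB_mono {γ : Arc n} {Q Q' : Arc n → Prop} {s t : Fin n}
    (hQ : ∀ s t h1 h2 h3, Q (subArc γ s t h1 h2 h3) → Q' (subArc γ s t h1 h2 h3))
    (h : DecB γ Q s t) : DecB γ Q' s t := by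
  induction h with
  | single s t h1 h2 h3 hq => exact DecB.single s t h1 h2 h3 (hQ s t h1 h2 h3 hq)
  | trans s t u _ _ ih1 ih2 => exact DecB.trans s t u ih1 ih2

/-- pieces below `x` or `y` -/
def Qxy (x y : Equiv.Perm (Fin n)) (β : Arc n) : Prop := wle (jp β) x ∨ wle (jp β) y

lemma dec_to_aux {γ : Arc n} {x y : Equiv.Perm (Fin n)} {s e : Fin n}
    (h : DecB γ (Qxy x y) s e) :
    ∀ u v : Fin n, u < v → (u = s ∨ (u ∈ γ.R ∧ s < u)) →
      (v = e ∨ (γ.p < v ∧ v < γ.q ∧ v ∉ γ.R ∧ s < v ∧ v < e)) → (u, v) ∈ CJ x y := by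
  induction h with
  | single s t h1 h2 h3 hq =>
    intro u v huv hu hv
    have hmem : (u, v) ∈ SA (subArc γ s t h1 h2 h3) := by
      rw [mem_SA_subArc]
      refine ⟨huv, ?_, ?_⟩
      · rcases hu with rfl | ⟨hu1, hu2⟩
        · exact Or.inl rfl
        · refine Or.inr ⟨hu1, hu2, ?_⟩
          rcases hv with rfl | hv
          · exact huv
          · exact huv.trans hv.2.2.2.2
      · rcases hv with rfl | ⟨_, _, hv3, hv4, hv5⟩
        · exact Or.inl rfl
        · exact Or.inr ⟨hv4, hv5, hv3⟩
    rcases hq with hw | hw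
    · exact TransGen.single (Or.inl (by rw [← invSet_jp] at hmem; exact hw hmem))
    · exact TransGen.single (Or.inr (by rw [← invSet_jp] at hmem; exact hw hmem))
  | trans s t e hl hr ihl ihr =>
    intro u v huv hu hv
    have hte : t < e := DecB_lt hr
    rcases lt_trichotomy v t with hvt | rfl | hvt
    · -- v < t : fully in left part
      apply ihl u v huv hu
      rcases hv with rfl | hv
      · exact absurd (hte.trans hvt) (lt_irrefl _)
      · exact Or.inr ⟨hv.1, hv.2.1, hv.2.2.1, hv.2.2.2.1, hvt⟩
    · -- v = t
      exact ihl u v huv hu (Or.inl rfl)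
    · -- v > t
      rcases lt_trichotomy u t with hut | rfl | hut
      · have h1 : (u, t) ∈ CJ x y := ihl u t hut hu (Or.inl rfl)
        have h2 : (t, v) ∈ CJ x y := by
          apply ihr t v hvt (Or.inl rfl)
          rcases hv with rfl | hv
          · exact Or.inl rfl
          · exact Or.inr ⟨hv.1, hv.2.1, hv.2.2.1, hvt, hv.2.2.2.2⟩
        exact TransGen.trans h1 h2
      · apply ihr u v huv (Or.inl rfl)
        rcases hv with rfl | hv
        · exact Or.inl rfl
        · exact Or.inr ⟨hv.1, hv.2.1, hv.2.2.1, hvt, hv.2.2.2.2⟩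
      · apply ihr u v huv
        · rcases hu with rfl | hu
          · exact absurd hut (fun h => absurd (DecB_lt hl) (fun h' => absurd (h.trans h') (lt_irrefl _)))
          · exact Or.inr ⟨hu.1, hut⟩
        · rcases hv with rfl | hv
          · exact Or.inl rfl
          · exact Or.inr ⟨hv.1, hv.2.1, hv.2.2.1, hut.trans huv, hv.2.2.2.2⟩

theorem dec_to {γ : Arc n} {x y : Equiv.Perm (Fin n)}
    (h : DecB γ (Qxy x y) γ.p γ.q) : SA γ ⊆ CJ x y := by
  rintro ⟨u, v⟩ ⟨huv, hu, hv⟩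
  apply dec_to_aux h u v huv
  · rcases hu with rfl | hu
    · exact Or.inl rfl
    · exact Or.inr ⟨hu, (γ.hR _ hu).1⟩
  · rcases hv with rfl | hv
    · exact Or.inl rfl
    · exact Or.inr ⟨hv.1, hv.2.1, hv.2.2, hv.1, hv.2.1⟩

theorem split_claim (x y : Equiv.Perm (Fin n)) (γ : Arc n) (hsub : SA γ ⊆ CJ x y) :
    SA γ ⊆ invSet x ∨ SA γ ⊆ invSet y ∨
      ∃ (t : Fin n) (ht1 : γ.p < t) (ht2 : t < γ.q),
        SA (subArc γ γ.p t ht1 (le_refl _) (le_of_lt ht2)) ⊆ CJ x y ∧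
        SA (subArc γ t γ.q ht2 (le_of_lt ht1) (le_refl _)) ⊆ CJ x y := by
  classical
  by_cases hgood : ∃ t : Fin n, (γ.p < t ∧ t < γ.q) ∧
      ((t ∉ γ.R ∧ ∀ v, t < v → v ∈ tgts γ → (t, v) ∈ CJ x y) ∨
       (t ∈ γ.R ∧ ∀ u, u < t → u ∈ srcs γ → (u, t) ∈ CJ x y))
  · obtain ⟨t, ⟨ht1, ht2⟩, hcase⟩ := hgood
    refine Or.inr (Or.inr ⟨t, ht1, ht2, ?_, ?_⟩)
    · -- left piece
      rintro ⟨u, v⟩ hm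
      rw [mem_SA_subArc] at hm
      obtain ⟨huv, hu, hv⟩ := hm
      have husrc : u ∈ srcs γ := by
        rcases hu with rfl | hu
        · exact Or.inl rfl
        · exact Or.inr hu.1
      rcases hv with rfl | ⟨hv1, hv2, hv3⟩
      · -- v = t
        rcases hcase with ⟨htL, _⟩ | ⟨htR, hbg⟩
        · exact hsub ⟨huv, husrc, Or.inr ⟨ht1, ht2, htL⟩⟩
        · exact hbg u huv husrc
      · exact hsub ⟨huv, husrc, Or.inr ⟨hv1, hv2.trans ht2, hv3⟩⟩
    · -- right piece
      rintro ⟨u, v⟩ hm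
      rw [mem_SA_subArc] at hm
      obtain ⟨huv, hu, hv⟩ := hm
      have hvtgt : v ∈ tgts γ := by
        rcases hv with rfl | hv
        · exact Or.inl rfl
        · exact Or.inr ⟨ht1.trans hv.1, hv.2.1, hv.2.2⟩
      rcases hu with rfl | ⟨hu1, hu2, _⟩
      · -- u = t
        rcases hcase with ⟨htL, hfg⟩ | ⟨htR, _⟩
        · exact hfg v huv hvtgt
        · exact hsub ⟨huv, Or.inr htR, hvtgt⟩
      · exact hsub ⟨huv, Or.inr hu1, hvtgt⟩
  · -- no good split point: show SA γ ⊆ invSet x or invSet y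
    push_neg at hgood
    have hN1 : ∀ v, γ.p < v → v < γ.q → v ∉ γ.R → (v, γ.q) ∉ CJ x y := by
      intro v hv1 hv2 hv3 hc
      set T : Finset (Fin n) :=
        Finset.univ.filter (fun w => γ.p < w ∧ w < γ.q ∧ w ∉ γ.R ∧ (w, γ.q) ∈ CJ x y) with hT
      have hvT : v ∈ T := by simp [hT, hv1, hv2, hv3, hc]
      have hTne : T.Nonempty := ⟨v, hvT⟩
      set w := T.max' hTne with hw
      have hwT : w ∈ T := T.max'_mem hTne
      simp only [hT, Finset.mem_filter, Finset.mem_univ, true_and] at hwT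
      obtain ⟨hw1, hw2, hw3, hw4⟩ := hwT
      obtain ⟨v', hv'1, hv'2, hv'3⟩ := (hgood w ⟨hw1, hw2⟩).1 hw3
      have hv'q : v' ≠ γ.q := by
        rintro rfl; exact hv'3 hw4
      have hv'int : γ.p < v' ∧ v' < γ.q ∧ v' ∉ γ.R := by
        rcases hv'2 with rfl | h
        · exact absurd rfl hv'q
        · exact h
      rcases CJ_split hw4 hv'1 hv'int.2.1 with h | h
      · exact hv'3 h
      · have hv'T : v' ∈ T := by
          simp only [hT, Finset.mem_filter, Finset.mem_univ, true_and]
          exact ⟨hv'int.1, hv'int.2.1, hv'int.2.2, h⟩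
        exact absurd (T.le_max' v' hv'T) (not_le.mpr hv'1)
    have hN2 : ∀ u, u ∈ γ.R → (γ.p, u) ∉ CJ x y := by
      intro u hu hc
      set T : Finset (Fin n) :=
        Finset.univ.filter (fun w => w ∈ γ.R ∧ (γ.p, w) ∈ CJ x y) with hT
      have huT : u ∈ T := by simp [hT, hu, hc]
      have hTne : T.Nonempty := ⟨u, huT⟩
      set w := T.min' hTne with hw
      have hwT : w ∈ T := T.min'_mem hTne
      simp only [hT, Finset.mem_filter, Finset.mem_univ, true_and] at hwT
      obtain ⟨hw1, hw2⟩ := hwT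
      obtain ⟨u', hu'1, hu'2, hu'3⟩ := (hgood w ⟨(γ.hR _ hw1).1, (γ.hR _ hw1).2⟩).2 hw1
      rcases hu'2 with rfl | hu'R
      · exact hu'3 hw2
      · rcases CJ_split hw2 (γ.hR _ hu'R).1 hu'1 with h | h
        · have hu'T : u' ∈ T := by
            simp only [hT, Finset.mem_filter, Finset.mem_univ, true_and]
            exact ⟨hu'R, h⟩
          exact absurd (T.min'_le u' hu'T) (not_le.mpr hu'1)
        · exact hu'3 h
    have htopCJ : (γ.p, γ.q) ∈ CJ x y := hsub ⟨γ.hpq, Or.inl rfl, Or.inl rfl⟩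
    have htop : jstep x y γ.p γ.q := by
      have htopCJ' : TransGen (jstep x y) γ.p γ.q := htopCJ
      cases htopCJ' with
      | single h => exact h
      | tail h1 h2 =>
        exfalso
        rename_i c
        have hc1 : γ.p < c := CJ_lt h1
        have hc2 : c < γ.q := jstep_lt h2
        by_cases hcR : c ∈ γ.R
        · exact hN2 c hcR h1
        · exact hN1 c hc1 hc2 hcR (TransGen.single h2)
    have key : ∀ z : Equiv.Perm (Fin n), invSet z ⊆ CJ x y →
        (γ.p, γ.q) ∈ invSet z → SA γ ⊆ invSet z := by
      intro z hz htopz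
      have ha : ∀ u, u ∈ γ.R → (u, γ.q) ∈ invSet z := by
        intro u hu
        rcases invSet_split htopz (γ.hR _ hu).1 (γ.hR _ hu).2 with h | h
        · exact absurd (hz h) (hN2 u hu)
        · exact h
      have hb : ∀ v, γ.p < v → v < γ.q → v ∉ γ.R → (γ.p, v) ∈ invSet z := by
        intro v h1 h2 h3
        rcases invSet_split htopz h1 h2 with h | h
        · exact h
        · exact absurd (hz h) (hN1 v h1 h2 h3)
      rintro ⟨a, b⟩ ⟨hab, hsrc, htgt⟩
      rcases hsrc with rfl | haR
      · rcases htgt with rfl | hbL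
        · exact htopz
        · exact hb b hbL.1 hbL.2.1 hbL.2.2
      · rcases htgt with rfl | hbL
        · exact ha a haR
        · rcases invSet_split (ha a haR) hab hbL.2.1 with h | h
          · exact h
          · exact absurd (hz h) (hN1 b hbL.1 hbL.2.1 hbL.2.2)
    rcases htop with hD | hD
    · exact Or.inl (key x (fun pr h => TransGen.single (Or.inl h)) hD)
    · exact Or.inr (Or.inl (key y (fun pr h => TransGen.single (Or.inr h)) hD))

theorem dec_of (x y : Equiv.Perm (Fin n)) (γ : Arc n) :
    ∀ (N : ℕ) (s t : Fin n) (h1 : s < t) (h2 : γ.p ≤ s) (h3 : t ≤ γ.q),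
      ((t : ℕ) - (s : ℕ) ≤ N) → SA (subArc γ s t h1 h2 h3) ⊆ CJ x y →
        DecB γ (Qxy x y) s t := by
  intro N
  induction N with
  | zero =>
    intro s t h1 _ _ hN _
    exfalso
    rw [Fin.lt_def] at h1
    omega
  | succ N ih =>
    intro s t h1 h2 h3 hN hsub
    rcases split_claim x y (subArc γ s t h1 h2 h3) hsub with h | h | h
    · exact DecB.single s t h1 h2 h3 (Or.inl (by rw [wle, invSet_jp]; exact h))
    · exact DecB.single s t h1 h2 h3 (Or.inr (by rw [wle, invSet_jp]; exact h))
    · obtain ⟨t', ht1, ht2, hc1, hc2⟩ := h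
      simp only [subArc_p, subArc_q] at ht1 ht2
      erw [subArc_subArc] at hc1 hc2
      have hst' : (t' : ℕ) - (s : ℕ) ≤ N := by
        rw [Fin.lt_def] at ht1 ht2
        omega
      have ht't : (t : ℕ) - (t' : ℕ) ≤ N := by
        rw [Fin.lt_def] at ht1 ht2
        omega
      exact DecB.trans s t' t (ih s t' ht1 h2 (le_trans (le_of_lt ht2) h3) hst' hc1)
        (ih t' t ht2 (le_trans h2 (le_of_lt ht1)) h3 ht't hc2)


section Force
variable {α α' : Arc n}

/-- complementary pieces as a step relation -/
def kstep (α α' : Arc n) (a b : Fin n) : Prop :=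
  (a < b ∧ a ∈ srcs α ∧ (b = α'.p ∨ (b ∈ tgts α ∧ b < α'.p))) ∨
  (a < b ∧ (a = α'.q ∨ (a ∈ srcs α ∧ α'.q < a)) ∧ b ∈ tgts α)

lemma kstep_ok (hsub : Subarc α' α) : StepOK (kstep α α') where
  lt := fun h => by rcases h with ⟨h, _⟩ | ⟨h, _⟩ <;> exact h
  split := by
    intro a c h b h1 h2
    rcases h with ⟨hac, hsrc, htgt⟩ | ⟨hac, hsrc, htgt⟩
    · -- K1
      have hbp' : b < α'.p := by
        rcases htgt with rfl | ⟨_, hlt⟩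
        · exact h2
        · exact h2.trans hlt
      have hpb : α.p < b := lt_of_le_of_lt (srcs_le hsrc) h1
      have hbq : b < α.q :=
        hbp'.trans (lt_of_lt_of_le α'.hpq hsub.2.1)
      by_cases hbR : b ∈ α.R
      · exact Or.inr (Or.inl ⟨h2, Or.inr hbR, htgt⟩)
      · exact Or.inl (Or.inl ⟨h1, hsrc, Or.inr ⟨Or.inr ⟨hpb, hbq, hbR⟩, hbp'⟩⟩)
    · -- K3
      have hq'b : α'.q < b := by
        rcases hsrc with rfl | ⟨_, hlt⟩
        · exact h1
        · exact hlt.trans h1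
      have hpb : α.p < b :=
        lt_of_le_of_lt (le_trans hsub.1 (le_of_lt α'.hpq)) hq'b
      have hbq : b < α.q := lt_of_lt_of_le h2 (tgts_le htgt)
      by_cases hbR : b ∈ α.R
      · exact Or.inr (Or.inr ⟨h2, Or.inr ⟨show b ∈ srcs α from Or.inr hbR, hq'b⟩, htgt⟩)
      · exact Or.inl (Or.inr ⟨h1, hsrc, Or.inr ⟨hpb, hbq, hbR⟩⟩)

noncomputable def wperm (hsub : Subarc α' α) : Equiv.Perm (Fin n) :=
  permOfInv (TGS (kstep α α')) (TGS_isInvSet (kstep_ok hsub))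

lemma invSet_wperm (hsub : Subarc α' α) : invSet (wperm hsub) = TGS (kstep α α') :=
  invSet_permOfInv _ _

lemma srcs'_of (hsub : Subarc α' α) {u : Fin n} (h : u ∈ srcs α) (h1 : α'.p ≤ u)
    (h2 : u < α'.q) : u ∈ srcs α' := by
  rcases eq_or_lt_of_le h1 with rfl | hlt
  · exact Or.inl rfl
  · rcases h with rfl | hR
    · exact absurd (lt_of_le_of_lt hsub.1 hlt) (lt_irrefl _)
    · exact Or.inr ((hsub.2.2 u).mpr ⟨hR, hlt, h2⟩)

lemma tgts'_of (hsub : Subarc α' α) {v : Fin n} (h : v ∈ tgts α) (h1 : α'.p < v)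
    (h2 : v ≤ α'.q) : v ∈ tgts α' := by
  rcases eq_or_lt_of_le h2 with rfl | hlt
  · exact Or.inl rfl
  · rcases h with rfl | ⟨_, _, hnR⟩
    · exact absurd (lt_of_lt_of_le hlt hsub.2.1) (lt_irrefl _)
    · exact Or.inr ⟨h1, hlt, fun hc => hnR ((hsub.2.2 v).mp hc).1⟩

/-- steps for the master chain -/
def mstep (α α' : Arc n) (a b : Fin n) : Prop := (a, b) ∈ SA α' ∨ kstep α α' a b

lemma fromP' (hsub : Subarc α' α) {v : Fin n} (hv : v ∈ tgts α) (h1 : α'.p < v) :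
    TransGen (mstep α α') α'.p v := by
  rcases le_or_gt v α'.q with hle | hlt
  · exact TransGen.single (Or.inl ⟨h1, Or.inl rfl, tgts'_of hsub hv h1 hle⟩)
  · refine TransGen.trans (TransGen.single (Or.inl ⟨α'.hpq, Or.inl rfl, Or.inl rfl⟩))
      (TransGen.single (Or.inr (Or.inr ⟨hlt, Or.inl rfl, hv⟩)))

lemma master (hsub : Subarc α' α) :
    ∀ {u v : Fin n}, (u, v) ∈ SA α → TransGen (mstep α α') u v := by
  rintro u v ⟨huv, hsrc, htgt⟩
  rcases lt_trichotomy u α'.p with hup | rfl | hup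
  · rcases le_or_gt v α'.p with hle | hlt
    · rcases eq_or_lt_of_le hle with rfl | hvlt
      · exact TransGen.single (Or.inr (Or.inl ⟨huv, hsrc, Or.inl rfl⟩))
      · exact TransGen.single (Or.inr (Or.inl ⟨huv, hsrc, Or.inr ⟨htgt, hvlt⟩⟩))
    · exact TransGen.trans
        (TransGen.single (Or.inr (Or.inl ⟨hup, hsrc, Or.inl rfl⟩)))
        (fromP' hsub htgt hlt)
  · exact fromP' hsub htgt huv
  · rcases lt_trichotomy u α'.q with huq | rfl | huq
    · have hu' : u ∈ srcs α' := srcs'_of hsub hsrc (le_of_lt hup) huq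
      rcases le_or_gt v α'.q with hle | hlt
      · exact TransGen.single (Or.inl ⟨huv, hu', tgts'_of hsub htgt (hup.trans huv) hle⟩)
      · exact TransGen.trans
          (TransGen.single (Or.inl ⟨huq, hu', Or.inl rfl⟩))
          (TransGen.single (Or.inr (Or.inr ⟨hlt, Or.inl rfl, htgt⟩)))
    · exact TransGen.single (Or.inr (Or.inr ⟨huv, Or.inl rfl, htgt⟩))
    · exact TransGen.single (Or.inr (Or.inr ⟨huv, Or.inr ⟨hsrc, huq⟩, htgt⟩))

/-- backward propagation along chains -/
lemma propag {s : Fin n → Fin n → Prop} (P : Fin n → Prop)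
    (hstep : ∀ c b, s c b → P b → P c) :
    ∀ {a b : Fin n}, TransGen s a b → P b → P a := by
  intro a b h
  induction h with
  | single h => exact hstep _ _ h
  | tail h1 h2 ih => exact fun hb => ih (hstep _ _ h2 hb)

lemma kstep_prop {c b : Fin n} (h : kstep α α' c b)
    (hb : b ∈ α'.R ∨ α'.q ≤ b) : c ∈ α'.R ∨ α'.q ≤ c := by
  rcases h with ⟨_, _, htgt⟩ | ⟨_, hsrc, _⟩
  · exfalso
    have hbp' : b ≤ α'.p := by
      rcases htgt with rfl | ⟨_, hlt⟩
      · exact le_refl _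
      · exact le_of_lt hlt
    rcases hb with hb | hb
    · exact absurd (lt_of_le_of_lt hbp' (α'.hR b hb).1) (lt_irrefl _)
    · exact absurd (lt_of_le_of_lt hbp' α'.hpq) (not_lt.mpr hb)
  · rcases hsrc with rfl | ⟨_, hlt⟩
    · exact Or.inr (le_refl _)
    · exact Or.inr (le_of_lt hlt)

lemma SA'_prop {c b : Fin n} (h : (c, b) ∈ SA' α')
    (hb : b ∈ α'.R ∨ α'.q ≤ b) : c ∈ α'.R ∨ α'.q ≤ c := by
  obtain ⟨⟨hcb, hsrc', htgt'⟩, hne⟩ := h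
  have hbq : b = α'.q := by
    rcases hb with hb | hb
    · exfalso
      rcases htgt' with hcq | ⟨_, _, hnR⟩
      · have h2 := (α'.hR b hb).2
        have hcq' : b = α'.q := hcq
        rw [hcq'] at h2
        exact absurd h2 (lt_irrefl _)
      · exact hnR hb
    · exact le_antisymm (tgts_le htgt') hb
  rcases hsrc' with hc | hR
  · exact absurd (Set.mem_singleton_iff.mpr (Prod.ext hc hbq)) hne
  · exact Or.inl hR

lemma noTop (hsub : Subarc α' α) :
    (α.p, α.q) ∉ invSet (joinP (jlow α') (wperm hsub)) := by
  rw [invSet_joinP]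
  intro h
  have h' : TransGen (jstep (jlow α') (wperm hsub)) α.p α.q := h
  have hP : α.p ∈ α'.R ∨ α'.q ≤ α.p := by
    refine propag (fun b => b ∈ α'.R ∨ α'.q ≤ b) ?_ h' (Or.inr hsub.2.1)
    intro c b hcb hb
    rcases hcb with hcb | hcb
    · rw [invSet_jlow] at hcb
      exact SA'_prop hcb hb
    · rw [invSet_wperm] at hcb
      have hcb' : TransGen (kstep α α') c b := hcb
      exact propag (fun b => b ∈ α'.R ∨ α'.q ≤ b) (fun c b h hb => kstep_prop h hb) hcb' hb
  rcases hP with hP | hP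
  · exact absurd (lt_of_le_of_lt hsub.1 (α'.hR _ hP).1) (lt_irrefl _)
  · exact absurd (lt_of_le_of_lt (le_trans hP hsub.1) α'.hpq) (lt_irrefl _)

theorem force {r : Setoid (Equiv.Perm (Fin n))} (hcong : IsWeakCong r)
    (hsub : Subarc α' α) (h : r.r (jp α') (jlow α')) : r.r (jp α) (jlow α) := by
  set w := wperm hsub with hw
  set x1 := joinP (jp α') w with hx1
  set x2 := joinP (jlow α') w with hx2
  have s1 : r.r x1 x2 :=
    hcong.1 (jp α') (jlow α') w w x1 x2 h (r.iseqv.refl w)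
      (isLUBw_joinP _ _) (isLUBw_joinP _ _)
  have C1 : wle (jp α) x1 := by
    rw [wle, invSet_jp, hx1, invSet_joinP]
    rintro ⟨u, v⟩ hm
    have := master hsub hm
    refine TransGen.mono ?_ u v this
    intro a b hab
    rcases hab with hab | hab
    · exact Or.inl (by rw [invSet_jp]; exact hab)
    · exact Or.inr (by rw [hw, invSet_wperm]; exact TransGen.single hab)
  set m2 := meetP x2 (jp α) with hm2
  have s2 : r.r (jp α) m2 := by
    refine hcong.2 x1 x2 (jp α) (jp α) (jp α) m2 s1 (r.iseqv.refl _) ?_ (isGLBw_meetP _ _)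
    exact ⟨C1, fun pr h => h, fun b hb1 hb2 => hb2⟩
  have hm2top : (α.p, α.q) ∉ invSet m2 := by
    intro hc
    exact noTop hsub ((isGLBw_meetP x2 (jp α)).1 hc)
  have hm2le : wle m2 (jlow α) := by
    rcases absorb (isGLBw_meetP x2 (jp α)).2.1 with h' | h'
    · exfalso
      apply hm2top
      rw [hm2, h', invSet_jp]
      exact top_mem_SA α
    · exact h'
  refine hcong.1 (jp α) m2 (jlow α) (jlow α) (jp α) (jlow α) s2 (r.iseqv.refl _) ?_ ?_
  · exact ⟨fun pr h => h, jlow_le_jp α, fun b hb1 _ => hb1⟩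
  · exact ⟨hm2le, fun pr h => h, fun b _ hb2 => hb2⟩

end Force


-- PART H : assembly

lemma subArc_self (β : Arc n) :
    subArc β β.p β.q β.hpq (le_refl _) (le_refl _) = β := by
  refine Arc.ext' rfl rfl ?_
  ext x
  rw [mem_subArc_R]
  exact ⟨fun h => h.1, fun h => ⟨h, (β.hR x h).1, (β.hR x h).2⟩⟩

lemma eq_of_SA_subset_top {α β : Arc n} (hsub : SA β ⊆ SA α)
    (htop : (α.p, α.q) ∈ SA β) : β = α := by
  have htopβ : (β.p, β.q) ∈ SA α := hsub (top_mem_SA β)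
  have hpp : β.p = α.p := le_antisymm (srcs_le htop.2.1) (srcs_le htopβ.2.1)
  have hqq : β.q = α.q := le_antisymm (tgts_le htopβ.2.2) (tgts_le htop.2.2)
  refine Arc.ext' hpp hqq ?_
  ext x
  constructor
  · intro hx
    have hmem : (x, β.q) ∈ SA α := hsub ⟨(β.hR x hx).2, Or.inr hx, Or.inl rfl⟩
    rcases hmem.2.1 with hc | hc
    · exfalso
      have hc' : x = α.p := hc
      have := (β.hR x hx).1
      rw [hpp, hc'] at this
      exact absurd this (lt_irrefl _)
    · exact hc
  · intro hx
    by_contra hxn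
    have hx1 : β.p < x := by rw [hpp]; exact (α.hR x hx).1
    have hx2 : x < β.q := by rw [hqq]; exact (α.hR x hx).2
    have hmem : (β.p, x) ∈ SA α := hsub ⟨hx1, Or.inl rfl, Or.inr ⟨hx1, hx2, hxn⟩⟩
    rcases hmem.2.2 with hc | hc
    · have hc' : x = α.q := hc
      rw [hc', hqq] at hx2
      exact absurd hx2 (lt_irrefl _)
    · exact hc.2.2 hx

/-- the congruence determined by an ideal of arcs -/
def rU (U : Set (Arc n)) : Setoid (Equiv.Perm (Fin n)) :=
  ⟨fun u w => ∀ β ∈ U, (wle (jp β) u ↔ wle (jp β) w),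
   ⟨fun _ _ _ => Iff.rfl,
    fun h β hβ => (h β hβ).symm,
    fun h1 h2 β hβ => (h1 β hβ).trans (h2 β hβ)⟩⟩

lemma rU_iff {U : Set (Arc n)} {u w : Equiv.Perm (Fin n)} :
    (rU U).r u w ↔ ∀ β ∈ U, (wle (jp β) u ↔ wle (jp β) w) := Iff.rfl

lemma wle_jp_lub {β : Arc n} {x y m : Equiv.Perm (Fin n)} (hm : IsLUBw x y m) :
    wle (jp β) m ↔ SA β ⊆ CJ x y := by
  rw [IsLUBw.eq_joinP hm, wle, invSet_jp, invSet_joinP]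
  exact Iff.rfl

lemma rU_isWeakCong {U : Set (Arc n)} (hU : ∀ α ∈ U, ∀ α' : Arc n, Subarc α' α → α' ∈ U) :
    IsWeakCong (rU U) := by
  constructor
  · -- joins
    intro x1 x2 y1 y2 m1 m2 hx hy hm1 hm2
    intro β hβ
    rw [wle_jp_lub hm1, wle_jp_lub hm2]
    have main : ∀ (a1 a2 b1 b2 : Equiv.Perm (Fin n)),
        ((rU U).r a1 a2) → ((rU U).r b1 b2) → SA β ⊆ CJ a1 b1 → SA β ⊆ CJ a2 b2 := by
      intro a1 a2 b1 b2 ha hb hsub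
      have hdec : DecB β (Qxy a1 b1) β.p β.q := by
        apply dec_of a1 b1 β ((β.q : ℕ)) β.p β.q β.hpq (le_refl _) (le_refl _) (by omega)
        rw [subArc_self]
        exact hsub
      have hdec2 : DecB β (Qxy a2 b2) β.p β.q := by
        refine DecB_mono ?_ hdec
        intro s t h1 h2 h3 hq
        have hpU : subArc β s t h1 h2 h3 ∈ U := hU β hβ _ (subarc_subArc β s t h1 h2 h3)
        rcases hq with hq | hq
        · exact Or.inl ((ha _ hpU).mp hq)
        · exact Or.inr ((hb _ hpU).mp hq)
      exact dec_to hdec2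
    constructor
    · exact main x1 x2 y1 y2 hx hy
    · exact main x2 x1 y2 y1 ((rU U).iseqv.symm hx) ((rU U).iseqv.symm hy)
  · -- meets
    intro x1 x2 y1 y2 m1 m2 hx hy hm1 hm2
    intro β hβ
    have hglb : ∀ (a b m : Equiv.Perm (Fin n)), IsGLBw a b m →
        (wle (jp β) m ↔ (wle (jp β) a ∧ wle (jp β) b)) := by
      intro a b m hm
      exact ⟨fun h => ⟨wle_trans h hm.1, wle_trans h hm.2.1⟩, fun h => hm.2.2 _ h.1 h.2⟩
    rw [hglb _ _ _ hm1, hglb _ _ _ hm2, hx β hβ, hy β hβ]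

lemma rU_uncontracted {U : Set (Arc n)} {α : Arc n} (hα : α ∈ U) :
    ¬ ContractsJ (rU U) (jp α) := by
  rw [contractsJ_iff]
  intro hc
  have := (hc α hα).mp (wle_refl (jp α))
  rw [wle, invSet_jp, invSet_jlow] at this
  exact (this (top_mem_SA α)).2 rfl

lemma rU_contracted {U : Set (Arc n)} {α : Arc n} (hα : α ∉ U) :
    ContractsJ (rU U) (jp α) := by
  rw [contractsJ_iff]
  intro β hβ
  constructor
  · intro h
    rw [wle, invSet_jp, invSet_jp] at h
    have htop : (α.p, α.q) ∉ SA β := by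
      intro hc
      exact hα (eq_of_SA_subset_top h hc ▸ hβ)
    rw [wle, invSet_jp, invSet_jlow]
    intro pr hpr
    refine ⟨h hpr, fun hc => ?_⟩
    rw [Set.mem_singleton_iff] at hc
    rw [hc] at hpr
    exact htop hpr
  · intro h
    exact wle_trans h (jlow_le_jp α)

end WS

end

/-- A set `U` of arcs is the set of arcs of the uncontracted join-irreducible
permutations of some lattice congruence of the weak order on `S_n` if and only if
`U` is closed under passing to subarcs. -/
theorem stmt14 (n : ℕ) (U : Set (Arc n)) :
    (∃ r : Setoid (Equiv.Perm (Fin n)), IsWeakCong r ∧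
        ∀ α : Arc n, α ∈ U ↔ ∃ j : Equiv.Perm (Fin n),
          diagram j = {α} ∧ ¬ ContractsJ r j) ↔
      (∀ α ∈ U, ∀ α' : Arc n, Subarc α' α → α' ∈ U) := by
  constructor
  · rintro ⟨r, hcong, hUchar⟩ α hα α' hsub
    obtain ⟨j, hdiag, hnc⟩ := (hUchar α).mp hα
    have hj : j = WS.jp α := WS.eq_jp_of_diagram hdiag
    rw [hj] at hnc
    refine (hUchar α').mpr ⟨WS.jp α', WS.diagram_jp α', ?_⟩
    intro hc
    exact hnc (WS.contractsJ_iff.mpr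
      (WS.force hcong hsub (WS.contractsJ_iff.mp hc)))
  · intro hU
    refine ⟨WS.rU U, WS.rU_isWeakCong hU, fun α => ⟨?_, ?_⟩⟩
    · intro hα
      exact ⟨WS.jp α, WS.diagram_jp α, WS.rU_uncontracted hα⟩
    · rintro ⟨j, hdiag, hnc⟩
      by_contra hα
      have hj : j = WS.jp α := WS.eq_jp_of_diagram hdiag
      rw [hj] at hnc
      exact hnc (WS.rU_contracted hα)
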